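/- Let f(z) = 4z²/(z³-1) and σ_P(u) = -u/(1 + f(z₀)u), z₀³ ≠ 1, z₀ ≠ 0. The tangent line L_P = {w = 2z₀z - z₀²} meets the cubic C = {1 + w³ - 2zw = 0} in the three points with curve-parameters t = z₀, t = 1/√z₀, t = -1/√z₀ (under the parametrization t ↦ ((1+t³)/(2t²), 1/t)), and σ_P permutes the two points with parameters ±1/√z₀. -/

import Mathlib

/-- The parametrization `t ↦ ((1+t³)/(2t²), 1/t)` of the cubic `C = {1 + w³ - 2zw = 0}`;
this is its `z`-coordinate. -/
noncomputable def cubicZ (t : ℂ) : ℂ := (1 + t ^ 3) / (2 * t ^ 2)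

/-- let `f(z) = 4z²/(z³-1)` and `σ_P(u) = -u/(1 + f(z₀)u)`, with `z₀ ≠ 0`,
`z₀³ ≠ 1`, and let `s` be a fixed square root of `z₀`. The tangent line
`L_P = {w = 2z₀z - z₀²}` to the parabola at `P = (z₀, z₀²)` meets the cubic
`C = {1 + w³ - 2zw = 0}` in exactly the three points with curve-parameters `t = z₀`,
`t = 1/s`, `t = -1/s` (under the parametrization `t ↦ ((1+t³)/(2t²), 1/t)`), and `σ_P`
permutes the two points with parameters `±1/s`. -/
theorem tangent_meets_cubic (z₀ s : ℂ) (hz0 : z₀ ≠ 0) (hz1 : z₀ ^ 3 ≠ 1)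
    (hs : s ^ 2 = z₀) (hs0 : s ≠ 0) :
    (∀ t : ℂ, t ≠ 0 →
      (1 / t = 2 * z₀ * cubicZ t - z₀ ^ 2 ↔ t = z₀ ∨ t = 1 / s ∨ t = -(1 / s))) ∧
    -(cubicZ (1 / s) - z₀) /
        (1 + (4 * z₀ ^ 2 / (z₀ ^ 3 - 1)) * (cubicZ (1 / s) - z₀))
      = cubicZ (-(1 / s)) - z₀ := by
  subst hs
  have h1 : s ^ 3 - 1 ≠ 0 := by
    intro h
    apply hz1
    have : s ^ 3 = 1 := by linear_combination h
    calc (s ^ 2) ^ 3 = (s ^ 3) ^ 2 := by ring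
    _ = 1 := by rw [this]; ring
  have h2 : s ^ 3 + 1 ≠ 0 := by
    intro h
    apply hz1
    have : s ^ 3 = -1 := by linear_combination h
    calc (s ^ 2) ^ 3 = (s ^ 3) ^ 2 := by ring
    _ = 1 := by rw [this]; ring
  have hz6 : (s ^ 2) ^ 3 - 1 ≠ 0 := by
    intro h
    exact hz1 (by linear_combination h)
  constructor
  · intro t ht
    constructor
    · intro h
      have hpoly2 : (2 * t) * ((t - s ^ 2) * ((s * t - 1) * (s * t + 1))) = 0 := by
        unfold cubicZ at h
        field_simp at h
        linear_combination (-2 * t) * h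
      have hpoly : (t - s ^ 2) * ((s * t - 1) * (s * t + 1)) = 0 :=
        (mul_eq_zero.mp hpoly2).resolve_left (by simpa using ht)
      rcases mul_eq_zero.mp hpoly with h0 | h0
      · left; linear_combination h0
      · rcases mul_eq_zero.mp h0 with h0 | h0
        · right; left
          field_simp
          linear_combination h0
        · right; right
          field_simp
          linear_combination h0
    · rintro (rfl | rfl | rfl) <;> (unfold cubicZ; field_simp; ring)
  · have h1' : 1 - s ^ 3 ≠ 0 := by intro h; exact h1 (by linear_combination -h)
    have h2' : (1:ℂ) + s ^ 3 ≠ 0 := by intro h; exact h2 (by linear_combination h)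
    have hD : 1 + 4 * (s ^ 2) ^ 2 / ((s ^ 2) ^ 3 - 1) * (cubicZ (1 / s) - s ^ 2)
        = (1 - s ^ 3) / (1 + s ^ 3) := by
      unfold cubicZ
      rw [show (s ^ 2) ^ 3 - 1 = (s ^ 3 - 1) * (s ^ 3 + 1) by ring]
      field_simp
      ring
    rw [hD, div_eq_iff (div_ne_zero h1' h2')]
    unfold cubicZ
    field_simp
    ring
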